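/- Let X be a real Banach space, M ⊆ X a bounded set and ε > 0. If M contains an ℓ₁-sequence with constant ε, then M is not ε'-weakly precompact for any 0 ≤ ε' < 2ε. -/
import Mathlib


open Filter Topology

/-- `δ((x_n)) ≤ ε`: for every functional in the closed unit ball of the dual,
`limsup x*(x_n) − liminf x*(x_n) ≤ ε`. -/
def DeltaLE {E : Type*} [NormedAddCommGroup E] [NormedSpace ℝ E] (x : ℕ → E) (ε : ℝ) : Prop :=
  ∀ f : E →L[ℝ] ℝ, ‖f‖ ≤ 1 →
    Filter.limsup (fun n => f (x n)) Filter.atTop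
      - Filter.liminf (fun n => f (x n)) Filter.atTop ≤ ε

/-- A set `M` is `ε`-weakly precompact if it is bounded and every sequence in `M`
admits a subsequence `(x_{n_k})` with `δ((x_{n_k})) ≤ ε`. -/
def IsWeaklyPrecompactWith {E : Type*} [NormedAddCommGroup E] [NormedSpace ℝ E]
    (ε : ℝ) (M : Set E) : Prop :=
  Bornology.IsBounded M ∧
    ∀ x : ℕ → E, (∀ n, x n ∈ M) →
      ∃ φ : ℕ → ℕ, StrictMono φ ∧ DeltaLE (fun k => x (φ k)) ε

/-- `(x_n)` is an `ℓ₁`-sequence with constant `c`. -/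
def IsL1SeqWith {E : Type*} [NormedAddCommGroup E] [NormedSpace ℝ E]
    (c : ℝ) (x : ℕ → E) : Prop :=
  Bornology.IsBounded (Set.range x) ∧
    ∀ (m : ℕ) (a : ℕ → ℝ),
      c * ∑ n ∈ Finset.range m, |a n| ≤ ‖∑ n ∈ Finset.range m, a n • x n‖

/-- The `ℓ₁` estimate over an arbitrary finite set of indices. -/
lemma l1_finset {X : Type*} [NormedAddCommGroup X] [NormedSpace ℝ X]
    {ε : ℝ} {x : ℕ → X}
    (hl1 : ∀ (m : ℕ) (a : ℕ → ℝ),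
      ε * ∑ n ∈ Finset.range m, |a n| ≤ ‖∑ n ∈ Finset.range m, a n • x n‖)
    (s : Finset ℕ) (a : ℕ → ℝ) (ha : ∀ i ∉ s, a i = 0) :
    ε * ∑ n ∈ s, |a n| ≤ ‖∑ n ∈ s, a n • x n‖ := by
  obtain ⟨m, hm⟩ : ∃ m, s ⊆ Finset.range m := by
    refine ⟨s.sup id + 1, fun i hi => Finset.mem_range.2 ?_⟩
    exact Nat.lt_succ_of_le (Finset.le_sup (f := id) hi)
  have h1 : ∑ n ∈ s, |a n| = ∑ n ∈ Finset.range m, |a n| :=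
    Finset.sum_subset hm (fun i _ hi => by rw [ha i hi, abs_zero])
  have h2 : ∑ n ∈ s, a n • x n = ∑ n ∈ Finset.range m, a n • x n :=
    Finset.sum_subset hm (fun i _ hi => by rw [ha i hi, zero_smul])
  rw [h1, h2]; exact hl1 m a

/-- Given an `ℓ₁`-sequence with constant `ε > 0` and target values bounded by `ε`,
there is a norm-one functional realizing those values. -/
lemma exists_functional {X : Type*} [NormedAddCommGroup X] [NormedSpace ℝ X]
    {ε : ℝ} (hε : 0 < ε) {x : ℕ → X}
    (hl1 : ∀ (m : ℕ) (a : ℕ → ℝ),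
      ε * ∑ n ∈ Finset.range m, |a n| ≤ ‖∑ n ∈ Finset.range m, a n • x n‖)
    (c : ℕ → ℝ) (hc : ∀ j, |c j| ≤ ε) :
    ∃ g : X →L[ℝ] ℝ, ‖g‖ ≤ 1 ∧ ∀ j, g (x j) = c j := by
  classical
  have hli : LinearIndependent ℝ x := by
    rw [linearIndependent_iff'']
    intro s g hg hsum i
    have h := l1_finset hl1 s g hg
    rw [hsum, norm_zero] at h
    have hsz : ∑ n ∈ s, |g n| = 0 := le_antisymm
      (by nlinarith [Finset.sum_nonneg (fun n (_ : n ∈ s) => abs_nonneg (g n))])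
      (Finset.sum_nonneg (fun n _ => abs_nonneg (g n)))
    by_cases hi : i ∈ s
    · have := (Finset.sum_eq_zero_iff_of_nonneg
        (fun n _ => abs_nonneg (g n))).1 hsz i hi
      exact abs_eq_zero.1 this
    · exact hg i hi
  set p : Submodule ℝ X := Submodule.span ℝ (Set.range x)
  let f : p →ₗ[ℝ] ℝ := (Finsupp.linearCombination ℝ c).comp hli.repr
  have hbound : ∀ v : p, ‖f v‖ ≤ 1 * ‖v‖ := by
    intro v
    set l := hli.repr v with hl
    have hv : (v : X) = ∑ n ∈ l.support, l n • x n := by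
      conv_lhs => rw [← hli.linearCombination_repr v]
      rw [Finsupp.linearCombination_apply, Finsupp.sum]
    have hfv : f v = ∑ n ∈ l.support, l n * c n := by
      simp only [f, LinearMap.comp_apply, ← hl, Finsupp.linearCombination_apply,
        Finsupp.sum, smul_eq_mul]
    rw [hfv, one_mul]
    calc ‖∑ n ∈ l.support, l n * c n‖
        ≤ ∑ n ∈ l.support, ‖l n * c n‖ := norm_sum_le _ _
      _ ≤ ∑ n ∈ l.support, |l n| * ε := by
          refine Finset.sum_le_sum fun n _ => ?_
          rw [Real.norm_eq_abs, abs_mul]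
          exact mul_le_mul_of_nonneg_left (hc n) (abs_nonneg _)
      _ = ε * ∑ n ∈ l.support, |l n| := by rw [← Finset.sum_mul, mul_comm]
      _ ≤ ‖∑ n ∈ l.support, l n • x n‖ :=
          l1_finset hl1 l.support l (fun i hi => Finsupp.notMem_support_iff.1 hi)
      _ = ‖v‖ := by rw [← hv]; rfl
  let F : p →L[ℝ] ℝ := LinearMap.mkContinuous f 1 hbound
  obtain ⟨g, hg, hgn⟩ := exists_extension_norm_eq p F
  refine ⟨g, ?_, ?_⟩
  · rw [hgn]; exact LinearMap.mkContinuous_norm_le f zero_le_one hbound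
  · intro j
    have hmem : x j ∈ p := Submodule.subset_span ⟨j, rfl⟩
    have := hg ⟨x j, hmem⟩
    rw [this]
    show f ⟨x j, hmem⟩ = c j
    simp only [f, LinearMap.comp_apply,
      hli.repr_eq_single j ⟨x j, hmem⟩ rfl, Finsupp.linearCombination_single, one_smul]

theorem l1_seq_implies_not_weaklyPrecompact
    {X : Type*} [NormedAddCommGroup X] [NormedSpace ℝ X] [CompleteSpace X]
    (M : Set X) (hM : Bornology.IsBounded M) (ε : ℝ) (hε : 0 < ε)
    (x : ℕ → X) (hx : ∀ n, x n ∈ M) (hl1 : IsL1SeqWith ε x) :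
    ∀ ε' : ℝ, 0 ≤ ε' → ε' < 2 * ε → ¬ IsWeaklyPrecompactWith ε' M := by
  classical
  intro ε' hε'0 hε'2 hpre
  obtain ⟨-, hcomp⟩ := hpre
  obtain ⟨φ, hφ, hδ⟩ := hcomp x hx
  set c : ℕ → ℝ := fun j => if ∃ k, φ k = j ∧ Even k then ε else -ε with hcdef
  have hc : ∀ j, |c j| ≤ ε := by
    intro j
    by_cases h : ∃ k, φ k = j ∧ Even k <;> simp [hcdef, h, abs_of_pos hε, abs_neg, le_of_lt hε,
      abs_of_neg (neg_neg_iff_pos.2 hε)]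
  obtain ⟨g, hgn, hgx⟩ := exists_functional hε hl1.2 c hc
  have hu : ∀ k, g (x (φ k)) = if Even k then ε else -ε := by
    intro k
    rw [hgx (φ k), hcdef]
    show (if ∃ k', φ k' = φ k ∧ Even k' then ε else -ε) = _
    by_cases h : Even k
    · rw [if_pos ⟨k, rfl, h⟩, if_pos h]
    · rw [if_neg, if_neg h]
      rintro ⟨k', hk', hek'⟩
      exact h (hφ.injective hk' ▸ hek')
  have hub : ∀ k, g (x (φ k)) ≤ ε := by
    intro k; rw [hu k]; split <;> linarith
  have hlb : ∀ k, -ε ≤ g (x (φ k)) := by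
    intro k; rw [hu k]; split <;> linarith
  have hbdd1 : IsBoundedUnder (· ≤ ·) atTop (fun k => g (x (φ k))) :=
    isBoundedUnder_of ⟨ε, hub⟩
  have hbdd2 : IsBoundedUnder (· ≥ ·) atTop (fun k => g (x (φ k))) :=
    isBoundedUnder_of ⟨-ε, hlb⟩
  have hls : ε ≤ limsup (fun k => g (x (φ k))) atTop := by
    refine le_limsup_of_frequently_le ?_ hbdd1
    refine frequently_atTop.2 fun a => ⟨2 * a, by omega, ?_⟩
    rw [hu (2 * a), if_pos ⟨a, two_mul a⟩]
  have hli : liminf (fun k => g (x (φ k))) atTop ≤ -ε := by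
    refine liminf_le_of_frequently_le ?_ hbdd2
    refine frequently_atTop.2 fun a => ⟨2 * a + 1, by omega, ?_⟩
    rw [hu (2 * a + 1), if_neg (by simp [Nat.even_add_one, parity_simps])]
  have hδg := hδ g hgn
  simp only at hδg
  linarith
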